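/- Let X be a metric space, Y ⊆ X with Borel partition {Z_y} (Z_y ⊆ B_r(y)), and let f : X → B be a bounded function into a C*-algebra with ‖grad‖-type Lipschitz bound: ‖f(x) − f(x')‖ ≤ L·d(x,x'). Let T be a bounded operator on ℓ²-sections over X with propagation ≤ p (i.e. χ_y T χ_z = 0 when d(y,z) > p + 2r for the indicator functions χ_y of Z_y), and suppose #(Y ∩ B_{2r+p}(x)) ≤ K for all x. Then the graded commutator satisfies ‖[T, f_r]‖ ≤ K·‖T‖·L·(2r + p), where f_r := Σ_{y} f(y)χ_y. -/

import Mathlib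

open ContinuousLinearMap

lemma aux_norm_sum_sq {H : Type*} [NormedAddCommGroup H] [InnerProductSpace ℂ H]
    {ι : Type*} {u : ι → H} (horth : ∀ i j, i ≠ j → (inner ℂ (u i) (u j) : ℂ) = 0)
    (s : Finset ι) : ‖∑ i ∈ s, u i‖ ^ 2 = ∑ i ∈ s, ‖u i‖ ^ 2 := by
  have h : (inner ℂ (∑ i ∈ s, u i) (∑ i ∈ s, u i) : ℂ) = ∑ i ∈ s, (inner ℂ (u i) (u i) : ℂ) := by
    rw [sum_inner]
    refine Finset.sum_congr rfl fun i hi => ?_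
    rw [inner_sum]
    exact Finset.sum_eq_single_of_mem i hi fun j _ hne => horth i j (Ne.symm hne)
  have h3 : RCLike.re (inner ℂ (∑ i ∈ s, u i) (∑ i ∈ s, u i) : ℂ)
      = ∑ i ∈ s, RCLike.re (inner ℂ (u i) (u i) : ℂ) := by rw [h, map_sum]
  rw [← inner_self_eq_norm_sq (𝕜 := ℂ), h3]
  exact Finset.sum_congr rfl fun i _ => inner_self_eq_norm_sq _

lemma aux_sum_norm_sq_le {H : Type*} [NormedAddCommGroup H] [InnerProductSpace ℂ H]
    {ι : Type*} {u : ι → H} (horth : ∀ i j, i ≠ j → (inner ℂ (u i) (u j) : ℂ) = 0)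
    {s0 : H} (hsum : HasSum u s0) (t : Finset ι) :
    ∑ i ∈ t, ‖u i‖ ^ 2 ≤ ‖s0‖ ^ 2 := by
  rw [← aux_norm_sum_sq horth t]
  have htend : Filter.Tendsto (fun t' : Finset ι => ‖∑ i ∈ t', u i‖ ^ 2)
      Filter.atTop (nhds (‖s0‖ ^ 2)) := (Filter.Tendsto.norm hsum).pow 2
  refine ge_of_tendsto htend ?_
  filter_upwards [Filter.eventually_ge_atTop t] with t' ht'
  rw [aux_norm_sum_sq horth, aux_norm_sum_sq horth]
  exact Finset.sum_le_sum_of_subset_of_nonneg ht' fun i _ _ => sq_nonneg _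

lemma aux_summable_norm_sq {H : Type*} [NormedAddCommGroup H] [InnerProductSpace ℂ H]
    {ι : Type*} {u : ι → H} (horth : ∀ i j, i ≠ j → (inner ℂ (u i) (u j) : ℂ) = 0)
    {s0 : H} (hsum : HasSum u s0) : Summable (fun i => ‖u i‖ ^ 2) :=
  summable_of_sum_le (fun _ => sq_nonneg _) (aux_sum_norm_sq_le horth hsum)

lemma aux_prod_sum_le {ι X : Type*} [MetricSpace X] (pt : ι → X) (Q : ℝ) (K : ℕ)
    (hfib : ∀ z : ι, ∀ P : Finset ι, (P.filter (fun y => dist (pt y) (pt z) ≤ Q)).card ≤ K)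
    (hfib' : ∀ y : ι, ∀ R : Finset ι, (R.filter (fun z => dist (pt y) (pt z) ≤ Q)).card ≤ K)
    (g h : ι → ℝ) (hg0 : ∀ i, 0 ≤ g i) (hh0 : ∀ i, 0 ≤ h i)
    (Gb Hb : ℝ) (hG : ∀ s : Finset ι, ∑ i ∈ s, g i ≤ Gb) (hH : ∀ s : Finset ι, ∑ i ∈ s, h i ≤ Hb)
    (s : Finset (ι × ι)) :
    ∑ q ∈ s, (if dist (pt q.1) (pt q.2) ≤ Q then g q.2 + h q.1 else 0)
      ≤ (K : ℝ) * Gb + (K : ℝ) * Hb := by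
  classical
  have hnn : ∀ q : ι × ι, 0 ≤ (if dist (pt q.1) (pt q.2) ≤ Q then g q.2 + h q.1 else 0) := by
    intro q; split
    · exact add_nonneg (hg0 _) (hh0 _)
    · exact le_refl 0
  set P := s.image Prod.fst with hP
  set R := s.image Prod.snd with hR
  have hsub : s ⊆ P ×ˢ R := fun q hq => Finset.mem_product.2
    ⟨Finset.mem_image_of_mem _ hq, Finset.mem_image_of_mem _ hq⟩
  have step1 : ∑ q ∈ s, (if dist (pt q.1) (pt q.2) ≤ Q then g q.2 + h q.1 else 0)
      ≤ ∑ q ∈ P ×ˢ R, (if dist (pt q.1) (pt q.2) ≤ Q then g q.2 + h q.1 else 0) :=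
    Finset.sum_le_sum_of_subset_of_nonneg hsub fun q _ _ => hnn q
  have step2 : ∑ q ∈ P ×ˢ R, (if dist (pt q.1) (pt q.2) ≤ Q then g q.2 + h q.1 else 0)
      = (∑ y ∈ P, ∑ z ∈ R, (if dist (pt y) (pt z) ≤ Q then g z else 0))
        + (∑ y ∈ P, ∑ z ∈ R, (if dist (pt y) (pt z) ≤ Q then h y else 0)) := by
    rw [Finset.sum_product, ← Finset.sum_add_distrib]
    refine Finset.sum_congr rfl fun y _ => ?_
    rw [← Finset.sum_add_distrib]
    refine Finset.sum_congr rfl fun z _ => ?_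
    split <;> simp
  have term1 : (∑ y ∈ P, ∑ z ∈ R, (if dist (pt y) (pt z) ≤ Q then g z else 0))
      ≤ (K : ℝ) * Gb := by
    rw [Finset.sum_comm]
    have hb : ∀ z ∈ R, (∑ y ∈ P, if dist (pt y) (pt z) ≤ Q then g z else 0)
        ≤ (K : ℝ) * g z := by
      intro z _
      rw [← Finset.sum_filter, Finset.sum_const, nsmul_eq_mul]
      exact mul_le_mul_of_nonneg_right (Nat.cast_le.2 (hfib z P)) (hg0 z)
    calc _ ≤ ∑ z ∈ R, (K : ℝ) * g z := Finset.sum_le_sum hb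
      _ = (K : ℝ) * ∑ z ∈ R, g z := by rw [Finset.mul_sum]
      _ ≤ (K : ℝ) * Gb := mul_le_mul_of_nonneg_left (hG R) (Nat.cast_nonneg K)
  have term2 : (∑ y ∈ P, ∑ z ∈ R, (if dist (pt y) (pt z) ≤ Q then h y else 0))
      ≤ (K : ℝ) * Hb := by
    have hb : ∀ y ∈ P, (∑ z ∈ R, if dist (pt y) (pt z) ≤ Q then h y else 0)
        ≤ (K : ℝ) * h y := by
      intro y _
      rw [← Finset.sum_filter, Finset.sum_const, nsmul_eq_mul]
      exact mul_le_mul_of_nonneg_right (Nat.cast_le.2 (hfib' y R)) (hh0 y)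
    calc _ ≤ ∑ y ∈ P, (K : ℝ) * h y := Finset.sum_le_sum hb
      _ = (K : ℝ) * ∑ y ∈ P, h y := by rw [Finset.mul_sum]
      _ ≤ (K : ℝ) * Hb := mul_le_mul_of_nonneg_left (hH P) (Nat.cast_nonneg K)
  linarith

lemma aux_amgm {C a b t s : ℝ} (hC : 0 ≤ C) (ht : 0 < t) (hts : t * s = 1) :
    C * (a * b) ≤ C * t / 2 * a ^ 2 + C * s / 2 * b ^ 2 := by
  have h5 : C * s / 2 * b ^ 2 * (2*t) = C * b ^ 2 := by
    have e : C * s / 2 * b ^ 2 * (2*t) = C * (t*s) * b ^ 2 := by ring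
    rw [e, hts]; ring
  have h6 : 0 ≤ C * (t*a - b) ^ 2 := mul_nonneg hC (sq_nonneg _)
  rw [← mul_le_mul_iff_of_pos_right (show (0:ℝ) < 2*t by positivity)]
  nlinarith [h6, h5]

set_option maxHeartbeats 1000000 in
/-- Commutator estimate for finite-propagation operators against step
functions.  `H` is the Hilbert space of `ℓ²`-sections over `X`, `χ y` the orthogonal
projections of a Borel partition `{Z_y}` with `Z_y ⊆ B_r(pt y)`, `M y` multiplication by
the value `f(pt y)` of an `L`-Lipschitz function `f : X → B` (so
`‖M y − M z‖ ≤ L·dist (pt y) (pt z)`), which graded-commutes with `T` with sign `σ` and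
commutes with the projections, `T` a bounded operator with `χ_y T χ_z = 0` for
`dist (pt y) (pt z) > p + 2r`, each point having at most `K` partners within `p + 2r`,
and `Fr = Σ_y M y χ_y` the multiplication operator by `f_r = Σ_y f(y) χ_{Z_y}`.
Then the graded commutator satisfies `‖[T, f_r]‖ ≤ K·‖T‖·L·(2r + p)`. -/
theorem finite_propagation_commutator_estimate
    {H : Type*} [NormedAddCommGroup H] [InnerProductSpace ℂ H] [CompleteSpace H]
    {ι X : Type*} [Countable ι] [MetricSpace X] (pt : ι → X)
    (χ : ι → H →L[ℂ] H)
    (hproj : ∀ y, IsIdempotentElem (χ y) ∧ IsSelfAdjoint (χ y))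
    (horth : ∀ y z, y ≠ z → (χ y) ∘L (χ z) = 0)
    (hcomplete : ∀ v : H, HasSum (fun y => χ y v) v)
    (M : ι → H →L[ℂ] H)
    (L r p : ℝ) (hL : 0 ≤ L) (hr : 0 < r) (hp : 0 ≤ p)
    (hLip : ∀ y z, ‖M y - M z‖ ≤ L * dist (pt y) (pt z))
    (σ : ℂ) (hσ : σ = 1 ∨ σ = -1)
    (T : H →L[ℂ] H)
    (hTM : ∀ y, (M y) ∘L T = σ • (T ∘L (M y)))
    (hMχ : ∀ y z, (M y) ∘L (χ z) = (χ z) ∘L (M y))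
    (hprop : ∀ y z, p + 2 * r < dist (pt y) (pt z) → (χ y) ∘L T ∘L (χ z) = 0)
    (K : ℕ)
    (hmul : ∀ y : ι, Set.Finite {z : ι | dist (pt y) (pt z) ≤ p + 2 * r} ∧
      Nat.card {z : ι | dist (pt y) (pt z) ≤ p + 2 * r} ≤ K)
    (Fr : H →L[ℂ] H)
    (hFr : ∀ v : H, HasSum (fun y => (M y) ((χ y) v)) (Fr v)) :
    ‖T ∘L Fr - σ • (Fr ∘L T)‖ ≤ (K : ℝ) * ‖T‖ * L * (2 * r + p) := by
  classical
  have hQ0 : (0:ℝ) < p + 2 * r := by linarith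
  set Q : ℝ := p + 2 * r with hQdef
  clear_value Q
  have hσ2 : σ * σ = 1 := by rcases hσ with h | h <;> rw [h] <;> ring
  have hadj : ∀ y (a b : H), (inner ℂ ((χ y) a) b : ℂ) = inner ℂ a ((χ y) b) := by
    intro y a b
    have h := (hproj y).2
    rw [IsSelfAdjoint, ContinuousLinearMap.star_eq_adjoint] at h
    conv_lhs => rw [← h]
    exact ContinuousLinearMap.adjoint_inner_left _ _ _
  have horthv : ∀ (a b : H) (i j : ι), i ≠ j → (inner ℂ ((χ i) a) ((χ j) b) : ℂ) = 0 := by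
    intro a b i j hij
    rw [hadj]
    have h1 : (χ i) ((χ j) b) = ((χ i) ∘L (χ j)) b := rfl
    rw [h1, horth i j hij]
    simp
  -- fiber counting
  have hfib' : ∀ y : ι, ∀ R : Finset ι, (R.filter (fun z => dist (pt y) (pt z) ≤ Q)).card ≤ K := by
    intro y R
    have hfin := (hmul y).1
    have hsub : (R.filter (fun z => dist (pt y) (pt z) ≤ Q)) ⊆ hfin.toFinset := by
      intro z hz
      rw [Set.Finite.mem_toFinset]
      exact (Finset.mem_filter.1 hz).2
    calc (R.filter (fun z => dist (pt y) (pt z) ≤ Q)).card ≤ hfin.toFinset.card :=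
          Finset.card_le_card hsub
      _ = Nat.card {z : ι | dist (pt y) (pt z) ≤ Q} := by
          rw [Nat.card_coe_set_eq, Set.ncard_eq_toFinset_card _ hfin]
      _ ≤ K := (hmul y).2
  have hfib : ∀ z : ι, ∀ P : Finset ι, (P.filter (fun y => dist (pt y) (pt z) ≤ Q)).card ≤ K := by
    intro z P
    have hfin := (hmul z).1
    have hsub : (P.filter (fun y => dist (pt y) (pt z) ≤ Q)) ⊆ hfin.toFinset := by
      intro y hy
      rw [Set.Finite.mem_toFinset]
      have := (Finset.mem_filter.1 hy).2
      simpa [dist_comm] using this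
    calc (P.filter (fun y => dist (pt y) (pt z) ≤ Q)).card ≤ hfin.toFinset.card :=
          Finset.card_le_card hsub
      _ = Nat.card {w : ι | dist (pt z) (pt w) ≤ Q} := by
          rw [Nat.card_coe_set_eq, Set.ncard_eq_toFinset_card _ hfin]
      _ ≤ K := (hmul z).2
  -- pointwise operator identities
  have hMχ' : ∀ y z (x : H), (M y) ((χ z) x) = (χ z) ((M y) x) := by
    intro y z x
    have h := ContinuousLinearMap.ext_iff.1 (hMχ y z) x
    simpa using h
  have hTM' : ∀ y (x : H), (M y) (T x) = σ • T ((M y) x) := by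
    intro y x
    have h := ContinuousLinearMap.ext_iff.1 (hTM y) x
    simpa using h
  have hop : ∀ y (x : H), (χ y) (T ((M y) x)) = σ • (M y) ((χ y) (T x)) := by
    intro y x
    rw [hMχ' y y (T x), hTM' y x, map_smul, smul_smul, hσ2, one_smul]
  have hprop' : ∀ y z : ι, ¬ dist (pt y) (pt z) ≤ Q → ∀ x : H, (χ y) (T ((χ z) x)) = 0 := by
    intro y z hd x
    have h0 := hprop y z (lt_of_not_ge hd)
    have h := ContinuousLinearMap.ext_iff.1 h0 x
    simpa using h
  have hC0 : (0:ℝ) ≤ ‖T‖ * (L * Q) := mul_nonneg (norm_nonneg T) (mul_nonneg hL hQ0.le)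
  -- the key inner ℂ product estimate
  have key : ∀ v w : H,
      ‖(inner ℂ w ((T ∘L Fr - σ • (Fr ∘L T)) v) : ℂ)‖
        ≤ (K : ℝ) * (‖T‖ * (L * Q)) * (‖v‖ * ‖w‖) := by
    intro v w
    by_cases hv : v = 0
    · simp [hv]
    by_cases hw : w = 0
    · simp [hw]
    have hv' : (0:ℝ) < ‖v‖ := norm_pos_iff.2 hv
    have hw' : (0:ℝ) < ‖w‖ := norm_pos_iff.2 hw
    -- summability data
    have hxv : ∀ t : Finset ι, ∑ i ∈ t, ‖(χ i) v‖ ^ 2 ≤ ‖v‖ ^ 2 :=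
      aux_sum_norm_sq_le (fun i j hij => horthv v v i j hij) (hcomplete v)
    have hyw : ∀ t : Finset ι, ∑ i ∈ t, ‖(χ i) w‖ ^ 2 ≤ ‖w‖ ^ 2 :=
      aux_sum_norm_sq_le (fun i j hij => horthv w w i j hij) (hcomplete w)
    have huorth : ∀ i j : ι, i ≠ j →
        (inner ℂ ((M i) ((χ i) v)) ((M j) ((χ j) v)) : ℂ) = 0 := by
      intro i j hij
      rw [hMχ' i i v, hMχ' j j v]
      exact horthv _ _ i j hij
    have hxu : ∀ t : Finset ι, ∑ i ∈ t, ‖(M i) ((χ i) v)‖ ^ 2 ≤ ‖Fr v‖ ^ 2 :=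
      aux_sum_norm_sq_le huorth (hFr v)
    set B₁ : ι × ι → ℂ := fun q => inner ℂ w ((χ q.1) (T ((M q.2) ((χ q.2) v)))) with hB₁def
    set B₂ : ι × ι → ℂ := fun q => inner ℂ w ((χ q.1) (T ((M q.1) ((χ q.2) v)))) with hB₂def
    have hB₁0 : ∀ q : ι × ι, ¬ dist (pt q.1) (pt q.2) ≤ Q → B₁ q = 0 := by
      intro q hd
      simp only [hB₁def, hMχ' q.2 q.2 v, hprop' q.1 q.2 hd, inner_zero_right]
    have hB₂0 : ∀ q : ι × ι, ¬ dist (pt q.1) (pt q.2) ≤ Q → B₂ q = 0 := by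
      intro q hd
      simp only [hB₂def, hMχ' q.1 q.2 v, hprop' q.1 q.2 hd, inner_zero_right]
    -- norm bounds
    have hB₁le : ∀ q : ι × ι, ‖B₁ q‖ ≤
        (if dist (pt q.1) (pt q.2) ≤ Q then
          (‖T‖/2) * ‖(M q.2) ((χ q.2) v)‖ ^ 2 + (‖T‖/2) * ‖(χ q.1) w‖ ^ 2 else 0) := by
      intro q
      by_cases hd : dist (pt q.1) (pt q.2) ≤ Q
      · rw [if_pos hd]
        have h1 : ‖B₁ q‖ ≤ ‖(χ q.1) w‖ * ‖T ((M q.2) ((χ q.2) v))‖ := by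
          simp only [hB₁def]
          rw [← hadj q.1 w]
          exact norm_inner_le_norm _ _
        have h2 : ‖T ((M q.2) ((χ q.2) v))‖ ≤ ‖T‖ * ‖(M q.2) ((χ q.2) v)‖ := T.le_opNorm _
        have ha := norm_nonneg ((M q.2) ((χ q.2) v))
        have hb := norm_nonneg ((χ q.1) w)
        nlinarith [mul_nonneg (norm_nonneg T)
          (sq_nonneg (‖(M q.2) ((χ q.2) v)‖ - ‖(χ q.1) w‖))]
      · rw [if_neg hd, hB₁0 q hd, norm_zero]
    have hB₂le : ∀ q : ι × ι, ‖B₂ q‖ ≤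
        (if dist (pt q.1) (pt q.2) ≤ Q then
          (‖T‖ * ‖(M q.2) ((χ q.2) v)‖ ^ 2 + ‖T‖ * ((L*Q) * ‖(χ q.2) v‖) ^ 2)
            + (‖T‖/2) * ‖(χ q.1) w‖ ^ 2 else 0) := by
      intro q
      by_cases hd : dist (pt q.1) (pt q.2) ≤ Q
      · rw [if_pos hd]
        have h3 : ‖(M q.1) ((χ q.2) v)‖
            ≤ ‖(M q.2) ((χ q.2) v)‖ + (L*Q) * ‖(χ q.2) v‖ := by
          have e1 : (M q.1) ((χ q.2) v)
              = (M q.2) ((χ q.2) v) + ((M q.1) - (M q.2)) ((χ q.2) v) := by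
            simp
          rw [e1]
          refine (norm_add_le _ _).trans (add_le_add_right ?_ _)
          refine ((M q.1 - M q.2).le_opNorm _).trans ?_
          refine mul_le_mul_of_nonneg_right ?_ (norm_nonneg _)
          refine (hLip q.1 q.2).trans ?_
          exact mul_le_mul_of_nonneg_left hd hL
        have h4 : ‖B₂ q‖ ≤ ‖(χ q.1) w‖
            * (‖T‖ * (‖(M q.2) ((χ q.2) v)‖ + (L*Q) * ‖(χ q.2) v‖)) := by
          have h1 : ‖B₂ q‖ ≤ ‖(χ q.1) w‖ * ‖T ((M q.1) ((χ q.2) v))‖ := by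
            simp only [hB₂def]
            rw [← hadj q.1 w]
            exact norm_inner_le_norm _ _
          refine h1.trans (mul_le_mul_of_nonneg_left ?_ (norm_nonneg _))
          exact (T.le_opNorm _).trans (mul_le_mul_of_nonneg_left h3 (norm_nonneg T))
        refine h4.trans ?_
        have e1 : ‖(M q.2) ((χ q.2) v)‖ * ‖(χ q.1) w‖
            ≤ ‖(M q.2) ((χ q.2) v)‖ ^ 2 + ‖(χ q.1) w‖ ^ 2 / 4 := by
          nlinarith [sq_nonneg (‖(M q.2) ((χ q.2) v)‖ - ‖(χ q.1) w‖ / 2)]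
        have e2 : ((L*Q) * ‖(χ q.2) v‖) * ‖(χ q.1) w‖
            ≤ ((L*Q) * ‖(χ q.2) v‖) ^ 2 + ‖(χ q.1) w‖ ^ 2 / 4 := by
          nlinarith [sq_nonneg ((L*Q) * ‖(χ q.2) v‖ - ‖(χ q.1) w‖ / 2)]
        calc ‖(χ q.1) w‖ * (‖T‖ * (‖(M q.2) ((χ q.2) v)‖ + (L*Q) * ‖(χ q.2) v‖))
            = ‖T‖ * (‖(M q.2) ((χ q.2) v)‖ * ‖(χ q.1) w‖
              + ((L*Q) * ‖(χ q.2) v‖) * ‖(χ q.1) w‖) := by ring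
          _ ≤ ‖T‖ * ((‖(M q.2) ((χ q.2) v)‖ ^ 2 + ‖(χ q.1) w‖ ^ 2 / 4)
              + (((L*Q) * ‖(χ q.2) v‖) ^ 2 + ‖(χ q.1) w‖ ^ 2 / 4)) :=
            mul_le_mul_of_nonneg_left (add_le_add e1 e2) (norm_nonneg T)
          _ = ‖T‖ * ‖(M q.2) ((χ q.2) v)‖ ^ 2 + ‖T‖ * ((L*Q) * ‖(χ q.2) v‖) ^ 2
              + ‖T‖ / 2 * ‖(χ q.1) w‖ ^ 2 := by ring
      · rw [if_neg hd, hB₂0 q hd, norm_zero]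
    -- summability of B₁ and B₂
    have hB₁S : Summable B₁ := by
      refine Summable.of_norm_bounded ?_ hB₁le
      refine summable_of_sum_le
        (c := (K : ℝ) * ((‖T‖/2) * ‖Fr v‖ ^ 2) + (K : ℝ) * ((‖T‖/2) * ‖w‖ ^ 2))
        (fun q => ?_) ?_
      · dsimp only; split
        · positivity
        · exact le_refl 0
      · intro s
        refine aux_prod_sum_le pt Q K hfib hfib'
          (fun z => (‖T‖/2) * ‖(M z) ((χ z) v)‖ ^ 2)
          (fun y => (‖T‖/2) * ‖(χ y) w‖ ^ 2)
          (fun z => by positivity) (fun y => by positivity)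
          ((‖T‖/2) * ‖Fr v‖ ^ 2) ((‖T‖/2) * ‖w‖ ^ 2)
          (fun s => by
            rw [← Finset.mul_sum]
            exact mul_le_mul_of_nonneg_left (hxu s) (by positivity))
          (fun s => by
            rw [← Finset.mul_sum]
            exact mul_le_mul_of_nonneg_left (hyw s) (by positivity)) s
    have hB₂S : Summable B₂ := by
      refine Summable.of_norm_bounded ?_ hB₂le
      refine summable_of_sum_le
        (c := (K : ℝ) * (‖T‖ * ‖Fr v‖ ^ 2 + ‖T‖ * (L*Q)^2 * ‖v‖ ^ 2)
          + (K : ℝ) * ((‖T‖/2) * ‖w‖ ^ 2))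
        (fun q => ?_) ?_
      · dsimp only; split
        · positivity
        · exact le_refl 0
      · intro s
        refine aux_prod_sum_le pt Q K hfib hfib'
          (fun z => ‖T‖ * ‖(M z) ((χ z) v)‖ ^ 2 + ‖T‖ * ((L*Q) * ‖(χ z) v‖) ^ 2)
          (fun y => (‖T‖/2) * ‖(χ y) w‖ ^ 2)
          (fun z => by positivity) (fun y => by positivity)
          (‖T‖ * ‖Fr v‖ ^ 2 + ‖T‖ * (L*Q)^2 * ‖v‖ ^ 2) ((‖T‖/2) * ‖w‖ ^ 2)
          (fun s => by
            rw [Finset.sum_add_distrib]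
            have e1 : ∑ i ∈ s, ‖T‖ * ‖(M i) ((χ i) v)‖ ^ 2 ≤ ‖T‖ * ‖Fr v‖ ^ 2 := by
              rw [← Finset.mul_sum]
              exact mul_le_mul_of_nonneg_left (hxu s) (norm_nonneg T)
            have e2 : ∑ i ∈ s, ‖T‖ * ((L*Q) * ‖(χ i) v‖) ^ 2
                ≤ ‖T‖ * (L*Q)^2 * ‖v‖ ^ 2 := by
              have e3 : ∀ i : ι, ‖T‖ * ((L*Q) * ‖(χ i) v‖) ^ 2
                  = (‖T‖ * (L*Q)^2) * ‖(χ i) v‖ ^ 2 := fun i => by ring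
              simp only [e3]
              rw [← Finset.mul_sum]
              exact mul_le_mul_of_nonneg_left (hxv s) (by positivity)
            linarith
          )
          (fun s => by
            rw [← Finset.mul_sum]
            exact mul_le_mul_of_nonneg_left (hyw s) (by positivity)) s
    -- identify sums
    obtain ⟨S₁, hS₁⟩ := hB₁S
    obtain ⟨S₂, hS₂⟩ := hB₂S
    have hS₁' : HasSum (fun z => (inner ℂ w (T ((M z) ((χ z) v))) : ℂ)) S₁ := by
      have hswap : HasSum (B₁ ∘ ⇑(Equiv.prodComm ι ι)) S₁ :=
        (Equiv.prodComm ι ι).hasSum_iff.2 hS₁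
      refine HasSum.prod_fiberwise hswap fun z => ?_
      have h := (hcomplete (T ((M z) ((χ z) v)))).mapL (innerSL ℂ w)
      simpa [hB₁def] using h
    have hgoal₁ : HasSum (fun z => (inner ℂ w (T ((M z) ((χ z) v))) : ℂ))
        (inner ℂ w (T (Fr v))) := by
      have h := ((hFr v).mapL T).mapL (innerSL ℂ w)
      simpa using h
    have hS₁eq : S₁ = inner ℂ w (T (Fr v)) := hS₁'.unique hgoal₁
    have hS₂' : HasSum (fun y => (inner ℂ w ((χ y) (T ((M y) v))) : ℂ)) S₂ := by
      refine HasSum.prod_fiberwise hS₂ fun y => ?_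
      have h := (hcomplete v).mapL
        ((innerSL ℂ w).comp ((χ y).comp (T.comp (M y))))
      simpa [hB₂def] using h
    have hgoal₂ : HasSum (fun y => (inner ℂ w ((χ y) (T ((M y) v))) : ℂ))
        (σ * inner ℂ w (Fr (T v))) := by
      have hσop : ∀ y : ι, (inner ℂ w ((χ y) (T ((M y) v))) : ℂ)
          = σ * inner ℂ w ((M y) ((χ y) (T v))) := by
        intro y; rw [hop y v, inner_smul_right]
      simp only [hσop]
      have h := ((hFr (T v)).mapL (innerSL ℂ w)).mul_left σ
      simpa using h
    have hS₂eq : S₂ = σ * inner ℂ w (Fr (T v)) := hS₂'.unique hgoal₂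
    have hAsum : HasSum (fun q => B₁ q - B₂ q)
        ((inner ℂ w (T (Fr v)) : ℂ) - σ * inner ℂ w (Fr (T v))) := by
      have h := hS₁.sub hS₂
      rwa [hS₁eq, hS₂eq] at h
    have hinner : (inner ℂ w ((T ∘L Fr - σ • (Fr ∘L T)) v) : ℂ)
        = (inner ℂ w (T (Fr v)) : ℂ) - σ * inner ℂ w (Fr (T v)) := by
      simp [ContinuousLinearMap.sub_apply, ContinuousLinearMap.smul_apply,
        ContinuousLinearMap.comp_apply, inner_sub_right, inner_smul_right]
    rw [hinner, ← hAsum.tsum_eq]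
    -- pointwise bound for the difference, with weight t = ‖w‖/‖v‖
    set t : ℝ := ‖w‖ / ‖v‖ with htdef
    clear_value t
    have ht : 0 < t := by rw [htdef]; exact div_pos hw' hv'
    have hts : t * (‖v‖ / ‖w‖) = 1 := by
      rw [htdef]
      field_simp
    have hdiff : ∀ q : ι × ι, ‖B₁ q - B₂ q‖ ≤
        (if dist (pt q.1) (pt q.2) ≤ Q then
          ((‖T‖ * (L*Q)) * t / 2) * ‖(χ q.2) v‖ ^ 2
            + ((‖T‖ * (L*Q)) * (‖v‖ / ‖w‖) / 2) * ‖(χ q.1) w‖ ^ 2 else 0) := by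
      intro q
      by_cases hd : dist (pt q.1) (pt q.2) ≤ Q
      · rw [if_pos hd]
        have e1 : B₁ q - B₂ q
            = inner ℂ w ((χ q.1) (T (((M q.2) - (M q.1)) ((χ q.2) v)))) := by
          simp only [hB₁def, hB₂def, ContinuousLinearMap.sub_apply, map_sub,
            inner_sub_right]
        have h1 : ‖B₁ q - B₂ q‖
            ≤ ‖(χ q.1) w‖ * (‖T‖ * ((L*Q) * ‖(χ q.2) v‖)) := by
          rw [e1, ← hadj q.1 w]
          refine (norm_inner_le_norm _ _).trans ?_
          refine mul_le_mul_of_nonneg_left ?_ (norm_nonneg _)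
          refine (T.le_opNorm _).trans ?_
          refine mul_le_mul_of_nonneg_left ?_ (norm_nonneg T)
          refine ((M q.2 - M q.1).le_opNorm _).trans ?_
          refine mul_le_mul_of_nonneg_right ?_ (norm_nonneg _)
          refine (hLip q.2 q.1).trans ?_
          rw [dist_comm]
          exact mul_le_mul_of_nonneg_left hd hL
        refine h1.trans ?_
        calc ‖(χ q.1) w‖ * (‖T‖ * ((L*Q) * ‖(χ q.2) v‖))
            = (‖T‖ * (L*Q)) * (‖(χ q.2) v‖ * ‖(χ q.1) w‖) := by ring
          _ ≤ (‖T‖ * (L*Q)) * t / 2 * ‖(χ q.2) v‖ ^ 2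
              + (‖T‖ * (L*Q)) * (‖v‖ / ‖w‖) / 2 * ‖(χ q.1) w‖ ^ 2 :=
            aux_amgm hC0 ht hts
      · rw [if_neg hd, hB₁0 q hd, hB₂0 q hd, sub_zero, norm_zero]
    have hDS : Summable (fun q : ι × ι =>
        (if dist (pt q.1) (pt q.2) ≤ Q then
          ((‖T‖ * (L*Q)) * t / 2) * ‖(χ q.2) v‖ ^ 2
            + ((‖T‖ * (L*Q)) * (‖v‖ / ‖w‖) / 2) * ‖(χ q.1) w‖ ^ 2 else 0)) := by
      refine summable_of_sum_le
        (c := (K : ℝ) * (((‖T‖ * (L*Q)) * t / 2) * ‖v‖ ^ 2)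
          + (K : ℝ) * (((‖T‖ * (L*Q)) * (‖v‖ / ‖w‖) / 2) * ‖w‖ ^ 2))
        (fun q => ?_) ?_
      · dsimp only; split
        · have := mul_nonneg hC0 ht.le
          have h2 : (0:ℝ) ≤ ‖v‖ / ‖w‖ := (div_pos hv' hw').le
          positivity
        · exact le_refl 0
      · intro s
        refine aux_prod_sum_le pt Q K hfib hfib'
          (fun z => ((‖T‖ * (L*Q)) * t / 2) * ‖(χ z) v‖ ^ 2)
          (fun y => ((‖T‖ * (L*Q)) * (‖v‖ / ‖w‖) / 2) * ‖(χ y) w‖ ^ 2)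
          (fun z => by
            have := mul_nonneg hC0 ht.le
            positivity)
          (fun y => by
            have h2 : (0:ℝ) ≤ ‖v‖ / ‖w‖ := (div_pos hv' hw').le
            positivity)
          (((‖T‖ * (L*Q)) * t / 2) * ‖v‖ ^ 2)
          (((‖T‖ * (L*Q)) * (‖v‖ / ‖w‖) / 2) * ‖w‖ ^ 2)
          (fun s => by
            rw [← Finset.mul_sum]
            refine mul_le_mul_of_nonneg_left (hxv s) ?_
            have := mul_nonneg hC0 ht.le
            positivity)
          (fun s => by
            rw [← Finset.mul_sum]
            refine mul_le_mul_of_nonneg_left (hyw s) ?_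
            have h2 : (0:ℝ) ≤ ‖v‖ / ‖w‖ := (div_pos hv' hw').le
            positivity) s
    have hsub : Summable (fun q : ι × ι => ‖B₁ q - B₂ q‖) :=
      Summable.of_nonneg_of_le (fun q => norm_nonneg _) hdiff hDS
    have hfinal : ‖∑' q : ι × ι, (B₁ q - B₂ q)‖
        ≤ (K : ℝ) * (((‖T‖ * (L*Q)) * t / 2) * ‖v‖ ^ 2)
          + (K : ℝ) * (((‖T‖ * (L*Q)) * (‖v‖ / ‖w‖) / 2) * ‖w‖ ^ 2) := by
      refine (norm_tsum_le_tsum_norm hsub).trans ?_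
      refine (Summable.tsum_le_tsum hdiff hsub hDS).trans ?_
      refine Summable.tsum_le_of_sum_le hDS ?_
      intro s
      refine aux_prod_sum_le pt Q K hfib hfib'
        (fun z => ((‖T‖ * (L*Q)) * t / 2) * ‖(χ z) v‖ ^ 2)
        (fun y => ((‖T‖ * (L*Q)) * (‖v‖ / ‖w‖) / 2) * ‖(χ y) w‖ ^ 2)
        (fun z => by
          have := mul_nonneg hC0 ht.le
          positivity)
        (fun y => by
          have h2 : (0:ℝ) ≤ ‖v‖ / ‖w‖ := (div_pos hv' hw').le
          positivity)
        (((‖T‖ * (L*Q)) * t / 2) * ‖v‖ ^ 2)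
        (((‖T‖ * (L*Q)) * (‖v‖ / ‖w‖) / 2) * ‖w‖ ^ 2)
        (fun s => by
          rw [← Finset.mul_sum]
          refine mul_le_mul_of_nonneg_left (hxv s) ?_
          have := mul_nonneg hC0 ht.le
          positivity)
        (fun s => by
          rw [← Finset.mul_sum]
          refine mul_le_mul_of_nonneg_left (hyw s) ?_
          have h2 : (0:ℝ) ≤ ‖v‖ / ‖w‖ := (div_pos hv' hw').le
          positivity) s
    refine hfinal.trans (le_of_eq ?_)
    rw [htdef]
    field_simp
    ring
  -- conclude the operator norm bound
  have hKC : (0:ℝ) ≤ (K : ℝ) * (‖T‖ * (L * Q)) :=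
    mul_nonneg (Nat.cast_nonneg K) hC0
  have hbound : ∀ v : H, ‖(T ∘L Fr - σ • (Fr ∘L T)) v‖
      ≤ ((K : ℝ) * (‖T‖ * (L * Q))) * ‖v‖ := by
    intro v
    rcases eq_or_ne ((T ∘L Fr - σ • (Fr ∘L T)) v) 0 with h0 | h0
    · rw [h0, norm_zero]
      exact mul_nonneg hKC (norm_nonneg v)
    · have h := key v ((T ∘L Fr - σ • (Fr ∘L T)) v)
      rw [inner_self_eq_norm_sq_to_K] at h
      simp only [norm_pow, RCLike.norm_ofReal, abs_norm] at h
      have h3 : (0:ℝ) < ‖(T ∘L Fr - σ • (Fr ∘L T)) v‖ := norm_pos_iff.2 h0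
      have h4 : ‖(T ∘L Fr - σ • (Fr ∘L T)) v‖ * ‖(T ∘L Fr - σ • (Fr ∘L T)) v‖
          ≤ (((K : ℝ) * (‖T‖ * (L * Q))) * ‖v‖) * ‖(T ∘L Fr - σ • (Fr ∘L T)) v‖ := by
        nlinarith
      exact le_of_mul_le_mul_right h4 h3
  have hfin := ContinuousLinearMap.opNorm_le_bound _ hKC hbound
  refine hfin.trans (le_of_eq ?_)
  rw [hQdef]
  ring
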